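/- The Hartley transform commutes with the supercharge operator Q: for every Schwartz function f : ℝ → ℝ and every λ ∈ ℝ, (𝓗(Qf))(λ) = (Q(𝓗f))(λ). -/

import Mathlib

/-- The cas function, `cas x = cos x - sin x`. -/
noncomputable def cas (x : ℝ) : ℝ := Real.cos x - Real.sin x

/-- The Hartley transform `(𝓗 f)(λ) = (1/√(2π)) ∫ f(x) cas(λ x) dx`. -/
noncomputable def hartley (f : ℝ → ℝ) (l : ℝ) : ℝ :=
    (1 / Real.sqrt (2 * Real.pi)) * ∫ x : ℝ, f x * cas (l * x)

/-- The supercharge operator `(Q f)(x) = (1/√2)(-f'(-x) + x f(x))`. -/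
noncomputable def supercharge (f : ℝ → ℝ) (x : ℝ) : ℝ :=
    (1 / Real.sqrt 2) * (-(deriv f (-x)) + x * f x)

open MeasureTheory Real

lemma continuous_cas : Continuous cas :=
  Real.continuous_cos.sub Real.continuous_sin

lemma abs_cas_le (x : ℝ) : |cas x| ≤ 2 := by
  have h1 := Real.neg_one_le_cos x
  have h2 := Real.cos_le_one x
  have h3 := Real.neg_one_le_sin x
  have h4 := Real.sin_le_one x
  rw [abs_le, cas]
  constructor <;> nlinarith

lemma hasDerivAt_cas (u : ℝ) : HasDerivAt cas (-Real.sin u - Real.cos u) u := by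
  exact (Real.hasDerivAt_cos u).sub (Real.hasDerivAt_sin u)

/-- Integrable times bounded continuous is integrable. -/
lemma integrable_mul_bdd {g h : ℝ → ℝ} (hgi : Integrable g) (hgc : Continuous g)
    (hhc : Continuous h) {C : ℝ} (hC : ∀ x, |h x| ≤ C) :
    Integrable (fun x => g x * h x) := by
  refine (hgi.norm.const_mul C).mono' ((hgc.mul hhc).aestronglyMeasurable) ?_
  filter_upwards with x
  have : ‖g x * h x‖ = ‖g x‖ * |h x| := by rw [norm_mul]; rfl
  rw [this]
  calc ‖g x‖ * |h x| ≤ ‖g x‖ * C := by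
        exact mul_le_mul_of_nonneg_left (hC x) (norm_nonneg _)
    _ = C * ‖g x‖ := mul_comm _ _

lemma deriv_schwartz_integrable (f : SchwartzMap ℝ ℝ) :
    Integrable (fun x => deriv (fun y => f y) x) := by
  have := (SchwartzMap.derivCLM ℝ ℝ f).integrable (μ := volume)
  exact this

lemma deriv_schwartz_continuous (f : SchwartzMap ℝ ℝ) :
    Continuous (fun x => deriv (fun y => f y) x) := by
  have := (SchwartzMap.derivCLM ℝ ℝ f).continuous
  have heq : (fun x => deriv (fun y => f y) x) = fun x => (SchwartzMap.derivCLM ℝ ℝ f) x := by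
    funext x; rw [SchwartzMap.derivCLM_apply]
  rw [heq]
  exact this

lemma integrable_id_mul_schwartz (f : SchwartzMap ℝ ℝ) :
    Integrable (fun x : ℝ => x * f x) := by
  refine (f.integrable_pow_mul volume 1).mono'
    ((continuous_id.mul f.continuous).aestronglyMeasurable) ?_
  filter_upwards with x
  simp [abs_mul, Real.norm_eq_abs, mul_comm]

lemma schwartz_hasDerivAt (f : SchwartzMap ℝ ℝ) (x : ℝ) :
    HasDerivAt (fun y => f y) (deriv (fun y => f y) x) x :=
  (f.differentiable.differentiableAt).hasDerivAt

/-- Integration by parts: `∫ f'(x) cas(cx) dx = ∫ f(x) (sin(cx)+cos(cx)) c dx`. -/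
lemma key_ibp (f : SchwartzMap ℝ ℝ) (c : ℝ) :
    ∫ x : ℝ, deriv (fun y => f y) x * cas (c * x)
      = ∫ x : ℝ, f x * ((Real.sin (c * x) + Real.cos (c * x)) * c) := by
  have hv : ∀ x : ℝ, HasDerivAt (fun x => cas (c * x))
      ((-Real.sin (c * x) - Real.cos (c * x)) * c) x := by
    intro x
    have h1 : HasDerivAt (fun x : ℝ => c * x) c x := by
      simpa using (hasDerivAt_id x).const_mul c
    exact (hasDerivAt_cas (c * x)).comp x h1
  have habs : ∀ x : ℝ, |(-Real.sin (c * x) - Real.cos (c * x)) * c| ≤ 2 * |c| := by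
    intro x
    have h1 := Real.neg_one_le_cos (c * x)
    have h2 := Real.cos_le_one (c * x)
    have h3 := Real.neg_one_le_sin (c * x)
    have h4 := Real.sin_le_one (c * x)
    rw [abs_mul]
    have : |(-Real.sin (c * x) - Real.cos (c * x))| ≤ 2 := by
      rw [abs_le]; constructor <;> nlinarith
    exact mul_le_mul_of_nonneg_right this (abs_nonneg _)
  have hcont : Continuous (fun x => (-Real.sin (c * x) - Real.cos (c * x)) * c) := by
    continuity
  have huv' : Integrable (fun x => f x * ((-Real.sin (c * x) - Real.cos (c * x)) * c)) :=
    integrable_mul_bdd f.integrable f.continuous hcont habs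
  have hu'v : Integrable (fun x => deriv (fun y => f y) x * cas (c * x)) :=
    integrable_mul_bdd (deriv_schwartz_integrable f) (deriv_schwartz_continuous f)
      (continuous_cas.comp (continuous_const.mul continuous_id)) (fun x => abs_cas_le (c * x))
  have huv : Integrable (fun x => f x * cas (c * x)) :=
    integrable_mul_bdd f.integrable f.continuous
      (continuous_cas.comp (continuous_const.mul continuous_id)) (fun x => abs_cas_le (c * x))
  have := integral_mul_deriv_eq_deriv_mul_of_integrable
    (u := fun y => f y) (v := fun x => cas (c * x))
    (u' := fun x => deriv (fun y => f y) x)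
    (v' := fun x => (-Real.sin (c * x) - Real.cos (c * x)) * c)
    (fun x _ => schwartz_hasDerivAt f x) (fun x _ => hv x) (by simpa [Pi.mul_def] using huv')
    (by simpa [Pi.mul_def] using hu'v) (by simpa [Pi.mul_def] using huv)
  have h2 : ∫ x : ℝ, f x * ((-Real.sin (c * x) - Real.cos (c * x)) * c)
      = - ∫ x : ℝ, f x * ((Real.sin (c * x) + Real.cos (c * x)) * c) := by
    rw [← integral_neg]
    congr 1; funext x; ring
  rw [h2] at this
  linarith [this]

/-- Differentiation under the integral sign for the Hartley kernel. -/
lemma hasDerivAt_hartley_integral (f : SchwartzMap ℝ ℝ) (t : ℝ) :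
    HasDerivAt (fun s => ∫ x : ℝ, f x * cas (s * x))
      (∫ x : ℝ, f x * ((-Real.sin (t * x) - Real.cos (t * x)) * x)) t := by
  have key := hasDerivAt_integral_of_dominated_loc_of_deriv_le
    (F := fun s (x : ℝ) => f x * cas (s * x))
    (F' := fun s (x : ℝ) => f x * ((-Real.sin (s * x) - Real.cos (s * x)) * x))
    (x₀ := t) (bound := fun x => 2 * (‖x‖ ^ 1 * ‖f x‖)) (s := Metric.ball t 1) (μ := volume) (Metric.ball_mem_nhds t one_pos)
    ?_ ?_ ?_ ?_ ?_ ?_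
  · exact key.2
  · filter_upwards with s
    exact ((f.continuous.mul
      (continuous_cas.comp (continuous_const.mul continuous_id)))).aestronglyMeasurable
  · exact integrable_mul_bdd f.integrable f.continuous
      (continuous_cas.comp (continuous_const.mul continuous_id)) (fun x => abs_cas_le (t * x))
  · exact (f.continuous.mul (by continuity)).aestronglyMeasurable
  · filter_upwards with x
    intro s _
    have h1 := Real.neg_one_le_cos (s * x)
    have h2 := Real.cos_le_one (s * x)
    have h3 := Real.neg_one_le_sin (s * x)
    have h4 := Real.sin_le_one (s * x)
    have hb : |(-Real.sin (s * x) - Real.cos (s * x))| ≤ 2 := by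
      rw [abs_le]; constructor <;> nlinarith
    have : ‖f x * ((-Real.sin (s * x) - Real.cos (s * x)) * x)‖
        = ‖f x‖ * (|(-Real.sin (s * x) - Real.cos (s * x))| * |x|) := by
      simp [norm_mul, abs_mul, Real.norm_eq_abs]
    rw [this]
    have hx : |(-Real.sin (s * x) - Real.cos (s * x))| * |x| ≤ 2 * |x| :=
      mul_le_mul_of_nonneg_right hb (abs_nonneg _)
    calc ‖f x‖ * (|(-Real.sin (s * x) - Real.cos (s * x))| * |x|)
        ≤ ‖f x‖ * (2 * |x|) := mul_le_mul_of_nonneg_left hx (norm_nonneg _)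
      _ = 2 * (‖x‖ ^ 1 * ‖f x‖) := by simp [Real.norm_eq_abs]; ring
  · exact (f.integrable_pow_mul volume 1).const_mul 2
  · filter_upwards with x
    intro s _
    have h1 : HasDerivAt (fun s : ℝ => s * x) x s := by
      simpa using (hasDerivAt_id s).mul_const x
    have h2 : HasDerivAt (fun s : ℝ => cas (s * x))
        ((-Real.sin (s * x) - Real.cos (s * x)) * x) s :=
      by exact (hasDerivAt_cas (s * x)).comp s h1
    exact h2.const_mul (f x)

/-- The Hartley transform commutes with the supercharge operator:
`𝓗(Q f) = Q(𝓗 f)` for every Schwartz function `f`. -/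
theorem hartley_comm_supercharge (f : SchwartzMap ℝ ℝ) (l : ℝ) :
    hartley (supercharge (fun x => f x)) l = supercharge (hartley (fun x => f x)) l := by
  set C : ℝ := 1 / Real.sqrt (2 * Real.pi) with hC
  set P : ℝ := ∫ x : ℝ, f x * cas (l * x) with hP
  set Qx : ℝ := ∫ x : ℝ, (x * f x) * cas (l * x) with hQx
  -- integrability facts
  have hcas : Continuous (fun x => cas (l * x)) :=
    continuous_cas.comp (continuous_const.mul continuous_id)
  have hint1 : Integrable (fun x => -(deriv (fun y => f y) (-x)) * cas (l * x)) := by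
    apply integrable_mul_bdd _ _ hcas (fun x => abs_cas_le (l * x))
    · exact ((deriv_schwartz_integrable f).comp_neg).neg
    · exact ((deriv_schwartz_continuous f).comp continuous_neg).neg
  have hint2 : Integrable (fun x => (x * f x) * cas (l * x)) :=
    integrable_mul_bdd (integrable_id_mul_schwartz f)
      (continuous_id.mul f.continuous) hcas (fun x => abs_cas_le (l * x))
  -- Step 1: ∫ deriv f(-x) cas(lx) dx = -(l * P)
  have h1 : ∫ x : ℝ, deriv (fun y => f y) (-x) * cas (l * x) = -(l * P) := by
    have hswap : ∫ x : ℝ, deriv (fun y => f y) (-x) * cas (l * x)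
        = ∫ x : ℝ, deriv (fun y => f y) x * cas (-l * x) := by
      rw [← integral_neg_eq_self (fun x : ℝ => deriv (fun y => f y) x * cas (-l * x)) volume]
      congr 1; funext x
      congr 1
      congr 1
      ring
    rw [hswap, key_ibp f (-l)]
    have : (fun x : ℝ => f x * ((Real.sin (-l * x) + Real.cos (-l * x)) * (-l)))
        = fun x : ℝ => -l * (f x * cas (l * x)) := by
      funext x
      have hs : Real.sin (-l * x) = -Real.sin (l * x) := by rw [neg_mul, Real.sin_neg]
      have hc : Real.cos (-l * x) = Real.cos (l * x) := by rw [neg_mul, Real.cos_neg]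
      rw [hs, hc, cas]; ring
    rw [this, integral_const_mul, ← hP]
    ring
  -- Step 2: deriv (hartley f) (-l) = -(C * Qx)
  have h2 : deriv (hartley (fun x => f x)) (-l) = -(C * Qx) := by
    have heq : hartley (fun x => f x) = fun s => C * ∫ x : ℝ, f x * cas (s * x) := rfl
    rw [heq]
    have hd := (hasDerivAt_hartley_integral f (-l)).const_mul C
    rw [hd.deriv]
    have : (fun x : ℝ => f x * ((-Real.sin (-l * x) - Real.cos (-l * x)) * x))
        = fun x : ℝ => -((x * f x) * cas (l * x)) := by
      funext x
      have hs : Real.sin (-l * x) = -Real.sin (l * x) := by rw [neg_mul, Real.sin_neg]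
      have hc : Real.cos (-l * x) = Real.cos (l * x) := by rw [neg_mul, Real.cos_neg]
      rw [hs, hc, cas]; ring
    rw [this, integral_neg, ← hQx]
    ring
  -- Step 3: compute the LHS
  have hLHS : hartley (supercharge (fun x => f x)) l
      = C * ((1 / Real.sqrt 2) * (l * P + Qx)) := by
    rw [hartley]
    have hintegrand : (fun x : ℝ => supercharge (fun x => f x) x * cas (l * x))
        = fun x : ℝ => (1 / Real.sqrt 2) *
          (-(deriv (fun y => f y) (-x)) * cas (l * x) + (x * f x) * cas (l * x)) := by
      funext x
      rw [supercharge]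
      ring
    rw [hintegrand, integral_const_mul, integral_add hint1 hint2]
    have hneg : ∫ x : ℝ, -(deriv (fun y => f y) (-x)) * cas (l * x)
        = -∫ x : ℝ, deriv (fun y => f y) (-x) * cas (l * x) := by
      rw [← integral_neg]; congr 1; funext x; ring
    rw [hneg, h1, ← hQx, ← hC]
    ring
  -- Step 4: compute the RHS
  have hRHS : supercharge (hartley (fun x => f x)) l
      = (1 / Real.sqrt 2) * (C * Qx + l * (C * P)) := by
    rw [supercharge, h2]
    have : hartley (fun x => f x) l = C * P := rfl
    rw [this]
    ring
  rw [hLHS, hRHS]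
  ring
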